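/- Let f ∈ ℝ^n with f_i ≥ 0 for all i, f ≠ 0, and |{i : f_i > 0}| ≤ n/2. Let m = min over all t ≥ 0 with {i : f_i > t} nonempty of RCC({i : f_i > t}, {i : f_i ≤ t}). Then TV(f) ≥ m · ‖f‖₁. -/

import Mathlib

open Finset MeasureTheory

lemma indInt (a b M : ℝ) :
    IntervalIntegrable (fun t => if a ≤ t ∧ t < b then (1:ℝ) else 0) volume 0 M := by
  have he : (fun t => if a ≤ t ∧ t < b then (1:ℝ) else 0)
      = Set.indicator (Set.Ico a b) (fun _ => (1:ℝ)) := by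
    ext t; simp [Set.indicator_apply, Set.mem_Ico]
  rw [he, intervalIntegrable_iff]
  exact (integrableOn_const measure_Ioc_lt_top.ne).indicator measurableSet_Ico

lemma indVal (a b M : ℝ) (ha : 0 ≤ a) (hb : b ≤ M) (hM : 0 ≤ M) :
    ∫ t in (0:ℝ)..M, (if a ≤ t ∧ t < b then (1:ℝ) else 0) = max (b - a) 0 := by
  have he : (fun t => if a ≤ t ∧ t < b then (1:ℝ) else 0)
      = Set.indicator (Set.Ico a b) (fun _ => (1:ℝ)) := by
    ext t; simp [Set.indicator_apply, Set.mem_Ico]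
  rw [intervalIntegral.integral_of_le hM, he, setIntegral_indicator measurableSet_Ico,
    setIntegral_const]
  have hvol : volume (Set.Ioc 0 M ∩ Set.Ico a b) = ENNReal.ofReal (b - a) := by
    apply le_antisymm
    · calc volume (Set.Ioc 0 M ∩ Set.Ico a b) ≤ volume (Set.Ico a b) :=
            measure_mono Set.inter_subset_right
        _ = ENNReal.ofReal (b - a) := Real.volume_Ico
    · calc ENNReal.ofReal (b - a) = volume (Set.Ioo a b) := Real.volume_Ioo.symm
        _ ≤ volume (Set.Ioc 0 M ∩ Set.Ico a b) := by
            apply measure_mono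
            intro x hx
            obtain ⟨h1, h2⟩ := Set.mem_Ioo.mp hx
            exact ⟨⟨lt_of_le_of_lt ha h1, le_trans h2.le hb⟩, h1.le, h2⟩
  rw [measureReal_def, hvol, smul_eq_mul, mul_one]
  rcases le_total b a with h | h
  · simp [max_eq_right (sub_nonpos.mpr h), ENNReal.ofReal_eq_zero.mpr (sub_nonpos.mpr h)]
  · rw [ENNReal.toReal_ofReal (sub_nonneg.mpr h), max_eq_left (sub_nonneg.mpr h)]


/-- Total variation `TV(f) = ½ Σ_{i,j} w_ij |f_i − f_j|`. -/
noncomputable def TV {n : ℕ} (W : Fin n → Fin n → ℝ) (f : Fin n → ℝ) : ℝ :=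
  (1 / 2) * ∑ i, ∑ j, W i j * |f i - f j|

/-- Ratio Cheeger cut of the partition `(C, Cᶜ)`. -/
noncomputable def RCC {n : ℕ} (W : Fin n → Fin n → ℝ) (C : Finset (Fin n)) : ℝ :=
  (∑ i ∈ C, ∑ j ∈ Cᶜ, W i j) / min (C.card : ℝ) (Cᶜ.card : ℝ)

set_option maxHeartbeats 1000000 in
/-- Let `f ≥ 0`, `f ≠ 0`, with at most `n/2` positive entries, and let `m` be the minimum
over all `t ≥ 0` with nonempty super-level set `{i : f_i > t}` of the ratio Cheeger cut of
this super-level set. Then `TV(f) ≥ m · ‖f‖₁`. -/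
theorem TV_lower_bound_cheeger (n : ℕ) (hn : 2 ≤ n)
    (W : Fin n → Fin n → ℝ)
    (hsym : ∀ i j, W i j = W j i) (hnonneg : ∀ i j, 0 ≤ W i j)
    (f : Fin n → ℝ) (hfpos : ∀ i, 0 ≤ f i) (hf : f ≠ 0)
    (hhalf : ((Finset.univ.filter (fun i => 0 < f i)).card : ℝ) ≤ n / 2)
    (m : ℝ)
    (hm : IsLeast {r : ℝ | ∃ t : ℝ, 0 ≤ t ∧
      (Finset.univ.filter (fun i => t < f i)).Nonempty ∧
      r = RCC W (Finset.univ.filter (fun i => t < f i))} m) :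
    m * (∑ i, |f i|) ≤ TV W f := by
  have hne : (Finset.univ : Finset (Fin n)).Nonempty := by
    haveI : NeZero n := ⟨by omega⟩
    exact Finset.univ_nonempty
  obtain ⟨i0, -, hi0⟩ := Finset.exists_max_image Finset.univ f hne
  set M := f i0 with hMdef
  have hM : 0 ≤ M := hfpos i0
  have hmax : ∀ i, f i ≤ M := fun i => hi0 i (Finset.mem_univ i)
  let g : ℝ → ℝ := fun t => ∑ i, ∑ j, W i j * (if f j ≤ t ∧ t < f i then (1:ℝ) else 0)
  let h : ℝ → ℝ := fun t => ∑ i, (if (0:ℝ) ≤ t ∧ t < f i then (1:ℝ) else 0)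
  have hgdef : g = fun t => ∑ i, ∑ j, W i j * (if f j ≤ t ∧ t < f i then (1:ℝ) else 0) := rfl
  have hhdef : h = fun t => ∑ i, (if (0:ℝ) ≤ t ∧ t < f i then (1:ℝ) else 0) := rfl
  -- integrability
  have hhint : IntervalIntegrable h volume 0 M := by
    rw [hhdef, intervalIntegrable_iff]
    exact integrable_finset_sum _ fun i _ => intervalIntegrable_iff.mp (indInt 0 (f i) M)
  have hgint : IntervalIntegrable g volume 0 M := by
    rw [hgdef, intervalIntegrable_iff]
    exact integrable_finset_sum _ fun i _ => integrable_finset_sum _ fun j _ =>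
      (intervalIntegrable_iff.mp (indInt (f j) (f i) M)).const_mul (W i j)
  -- integral of h
  have hH : ∫ t in (0:ℝ)..M, h t = ∑ i, |f i| := by
    rw [hhdef]
    rw [intervalIntegral.integral_finset_sum (s := Finset.univ)
      (f := fun (i : Fin n) t => if (0:ℝ) ≤ t ∧ t < f i then (1:ℝ) else 0)
      (fun i _ => indInt 0 (f i) M)]
    refine Finset.sum_congr rfl fun i _ => ?_
    rw [indVal 0 (f i) M le_rfl (hmax i) hM, sub_zero, max_eq_left (hfpos i),
      abs_of_nonneg (hfpos i)]
  -- integral of g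
  have hG : ∫ t in (0:ℝ)..M, g t = TV W f := by
    rw [hgdef]
    rw [intervalIntegral.integral_finset_sum (s := Finset.univ)
      (f := fun (i : Fin n) t => ∑ j, W i j * (if f j ≤ t ∧ t < f i then (1:ℝ) else 0))
      (fun i _ => by
        rw [intervalIntegrable_iff]
        exact integrable_finset_sum _ fun j _ =>
          (intervalIntegrable_iff.mp (indInt (f j) (f i) M)).const_mul (W i j))]
    have step : ∀ i : Fin n, ∫ t in (0:ℝ)..M,
        (∑ j, W i j * (if f j ≤ t ∧ t < f i then (1:ℝ) else 0))
        = ∑ j, W i j * max (f i - f j) 0 := by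
      intro i
      rw [intervalIntegral.integral_finset_sum (s := Finset.univ)
        (f := fun (j : Fin n) t => W i j * (if f j ≤ t ∧ t < f i then (1:ℝ) else 0))
        (fun j _ => (indInt (f j) (f i) M).const_mul (W i j))]
      refine Finset.sum_congr rfl fun j _ => ?_
      rw [intervalIntegral.integral_const_mul, indVal (f j) (f i) M (hfpos j) (hmax i) hM]
    rw [Finset.sum_congr rfl fun i _ => step i]
    -- now show ∑ i, ∑ j, W i j * max (f i - f j) 0 = TV W f
    have habs : ∀ x : ℝ, |x| = max x 0 + max (-x) 0 := by
      intro x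
      rcases le_total x 0 with hx | hx
      · rw [abs_of_nonpos hx, max_eq_right hx, max_eq_left (neg_nonneg.mpr hx), zero_add]
      · rw [abs_of_nonneg hx, max_eq_left hx, max_eq_right (neg_nonpos.mpr hx), add_zero]
    have key : ∑ i, ∑ j, W i j * |f i - f j|
        = 2 * ∑ i, ∑ j, W i j * max (f i - f j) 0 := by
      have e1 : ∀ i j : Fin n, W i j * |f i - f j|
          = W i j * max (f i - f j) 0 + W i j * max (f j - f i) 0 := by
        intro i j
        rw [habs (f i - f j), mul_add, neg_sub]
      calc ∑ i, ∑ j, W i j * |f i - f j|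
          = ∑ i, ∑ j, (W i j * max (f i - f j) 0 + W i j * max (f j - f i) 0) := by
            exact Finset.sum_congr rfl fun i _ => Finset.sum_congr rfl fun j _ => e1 i j
        _ = (∑ i, ∑ j, W i j * max (f i - f j) 0)
            + ∑ i, ∑ j, W i j * max (f j - f i) 0 := by
            rw [← Finset.sum_add_distrib]
            exact Finset.sum_congr rfl fun i _ => Finset.sum_add_distrib
        _ = (∑ i, ∑ j, W i j * max (f i - f j) 0)
            + ∑ j, ∑ i, W i j * max (f j - f i) 0 := by
            congr 1
            exact Finset.sum_comm
        _ = 2 * ∑ i, ∑ j, W i j * max (f i - f j) 0 := by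
            rw [two_mul]
            congr 1
            exact Finset.sum_congr rfl fun j _ => Finset.sum_congr rfl fun i _ => by
              rw [hsym i j]
    rw [TV, key]
    ring
  -- pointwise bound
  have hpt : ∀ t ∈ Set.Icc (0:ℝ) M, m * h t ≤ g t := by
    intro t ht
    set C : Finset (Fin n) := Finset.univ.filter (fun i => t < f i) with hCdef
    have hh : h t = (C.card : ℝ) := by
      rw [hhdef]
      simp only
      rw [Finset.sum_congr rfl (fun i _ => if_congr (and_iff_right ht.1) rfl rfl)]
      rw [Finset.sum_boole]
    have hCc : Cᶜ = Finset.univ.filter (fun j => ¬ t < f j) := by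
      rw [hCdef, Finset.compl_filter]
    have hg : g t = ∑ i ∈ C, ∑ j ∈ Cᶜ, W i j := by
      rw [hCdef, hCc, Finset.sum_filter]
      rw [hgdef]
      simp only
      refine Finset.sum_congr rfl fun i _ => ?_
      rw [Finset.sum_filter]
      by_cases h1 : t < f i
      · rw [if_pos h1]
        refine Finset.sum_congr rfl fun j _ => ?_
        by_cases h2 : f j ≤ t
        · rw [if_pos ⟨h2, h1⟩, if_pos (not_lt.mpr h2), mul_one]
        · rw [if_neg (fun hc => h2 hc.1), if_neg (fun hc => hc (not_le.mp h2)), mul_zero]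
      · rw [if_neg h1]
        refine Finset.sum_eq_zero fun j _ => ?_
        rw [if_neg (fun hc => h1 hc.2), mul_zero]
    rcases Finset.eq_empty_or_nonempty C with hC | hC
    · have : h t = 0 := by rw [hh, hC]; simp
      rw [this, mul_zero, hg]
      exact Finset.sum_nonneg fun i _ => Finset.sum_nonneg fun j _ => hnonneg i j
    · have hmle : m ≤ RCC W C := hm.2 ⟨t, ht.1, hC, rfl⟩
      have hsub : C ⊆ Finset.univ.filter (fun i => 0 < f i) := by
        intro i hi
        simp only [hCdef, Finset.mem_filter, Finset.mem_univ, true_and] at hi ⊢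
        exact lt_of_le_of_lt ht.1 hi
      have hcard : (C.card : ℝ) ≤ n / 2 :=
        le_trans (by exact_mod_cast Finset.card_le_card hsub) hhalf
      have hcompl : (Cᶜ.card : ℝ) = n - C.card := by
        rw [Finset.card_compl]
        rw [Nat.cast_sub (Finset.card_le_univ C)]
        simp
      have hmin : min (C.card : ℝ) (Cᶜ.card : ℝ) = C.card := by
        rw [min_eq_left]
        rw [hcompl]
        linarith
      have hpos : (0:ℝ) < C.card := by exact_mod_cast Finset.card_pos.mpr hC
      rw [hh, hg]
      have hmle' : m ≤ (∑ i ∈ C, ∑ j ∈ Cᶜ, W i j) / (C.card : ℝ) := by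
        rwa [RCC, hmin] at hmle
      exact (le_div_iff₀ hpos).mp hmle'
  -- assemble
  calc m * (∑ i, |f i|) = ∫ t in (0:ℝ)..M, m * h t := by
        rw [intervalIntegral.integral_const_mul, hH]
    _ ≤ ∫ t in (0:ℝ)..M, g t :=
        intervalIntegral.integral_mono_on hM (hhint.const_mul m) hgint hpt
    _ = TV W f := hG
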